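/- Let B be a Hopf algebra, L a normalized commuting 2-cocycle and σ = L∘(id⊗S)∘Δ. Then ∂σ = L + L∘(S⊗S)∘τ, where ∂σ(a⊗b) = δ(a)σ(b) − σ(ab) + σ(a)δ(b). -/

import Mathlib

open TensorProduct Coalgebra

variable {B : Type} [Ring B] [HopfAlgebra ℂ B]

/-- The comultiplication `Λ = (id ⊗ τ ⊗ id) ∘ (Δ ⊗ Δ)` of `B ⊗ B`. -/
noncomputable def Lam : B ⊗[ℂ] B →ₗ[ℂ] (B ⊗[ℂ] B) ⊗[ℂ] (B ⊗[ℂ] B) :=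
  (TensorProduct.tensorTensorTensorComm ℂ B B B B).toLinearMap ∘ₗ
    TensorProduct.map (comul (R := ℂ)) (comul (R := ℂ))

/-- Convolution of linear functionals w.r.t. a given comultiplication. -/
noncomputable def convWith {M : Type} [AddCommGroup M] [Module ℂ M]
    (Δ : M →ₗ[ℂ] M ⊗[ℂ] M) (φ ψ : M →ₗ[ℂ] ℂ) : M →ₗ[ℂ] ℂ :=
  LinearMap.mul' ℂ ℂ ∘ₗ TensorProduct.map φ ψ ∘ₗ Δ

/-- Convolution powers `φ^{⋆n}` w.r.t. a comultiplication `Δ` and counit `ε` (the 0-th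
power being the counit). -/
noncomputable def convPowWith {M : Type} [AddCommGroup M] [Module ℂ M]
    (Δ : M →ₗ[ℂ] M ⊗[ℂ] M) (ε : M →ₗ[ℂ] ℂ) (φ : M →ₗ[ℂ] ℂ) : ℕ → (M →ₗ[ℂ] ℂ)
  | 0 => ε
  | n + 1 => convWith Δ φ (convPowWith Δ ε φ n)

/-- The counit `δ ⊗ δ` of `B ⊗ B`. -/
noncomputable def counit2 : B ⊗[ℂ] B →ₗ[ℂ] ℂ :=
  LinearMap.mul' ℂ ℂ ∘ₗ TensorProduct.map (counit (R := ℂ)) (counit (R := ℂ))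

/-- `L ⋆ μ = (L ⊗ μ) ∘ Λ : B ⊗ B → B`. -/
noncomputable def LconvMu (L : B ⊗[ℂ] B →ₗ[ℂ] ℂ) : B ⊗[ℂ] B →ₗ[ℂ] B :=
  (TensorProduct.lid ℂ B).toLinearMap ∘ₗ TensorProduct.map L (LinearMap.mul' ℂ B) ∘ₗ Lam

/-- `μ ⋆ L = (μ ⊗ L) ∘ Λ : B ⊗ B → B`. -/
noncomputable def MuConvL (L : B ⊗[ℂ] B →ₗ[ℂ] ℂ) : B ⊗[ℂ] B →ₗ[ℂ] B :=
  (TensorProduct.rid ℂ B).toLinearMap ∘ₗ TensorProduct.map (LinearMap.mul' ℂ B) L ∘ₗ Lam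

/-- `σ = L ∘ (id ⊗ S) ∘ Δ : B → ℂ`. -/
noncomputable def sigma (L : B ⊗[ℂ] B →ₗ[ℂ] ℂ) : B →ₗ[ℂ] ℂ :=
  L ∘ₗ TensorProduct.map LinearMap.id (HopfAlgebra.antipode (R := ℂ)) ∘ₗ comul (R := ℂ)

/-! ### Auxiliary lemmas -/

section Helpers
variable {M : Type} [AddCommGroup M] [Module ℂ M] [Coalgebra ℂ M]

lemma sum_counit_smul_right' {ι : Type*} {a : M} (r : Coalgebra.Repr ℂ a ι) :
    ∑ i ∈ r.index, counit (R := ℂ) (r.left i) • r.right i = a := by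
  have := Coalgebra.sum_counit_tmul_eq r
  apply_fun (TensorProduct.lid ℂ M) at this
  rw [map_sum] at this
  simp only [lid_tmul] at this
  simpa using this

lemma sum_counit_smul_left' {ι : Type*} {a : M} (r : Coalgebra.Repr ℂ a ι) :
    ∑ i ∈ r.index, counit (R := ℂ) (r.right i) • r.left i = a := by
  have := Coalgebra.sum_tmul_counit_eq r
  apply_fun (TensorProduct.rid ℂ M) at this
  rw [map_sum] at this
  simp only [rid_tmul] at this
  simpa using this

lemma counit_sum_apply' {ι : Type*} {a : M} (r : Coalgebra.Repr ℂ a ι) (φ : M →ₗ[ℂ] ℂ) :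
    ∑ i ∈ r.index, counit (R := ℂ) (r.left i) * φ (r.right i) = φ a := by
  simp_rw [← smul_eq_mul, ← map_smul]
  rw [← map_sum, sum_counit_smul_right']

lemma sum_counit_apply' {ι : Type*} {a : M} (r : Coalgebra.Repr ℂ a ι) (φ : M →ₗ[ℂ] ℂ) :
    ∑ i ∈ r.index, φ (r.left i) * counit (R := ℂ) (r.right i) = φ a := by
  have : ∀ i, φ (r.left i) * counit (R := ℂ) (r.right i)
      = φ (counit (R := ℂ) (r.right i) • r.left i) := by
    intro i; rw [map_smul, smul_eq_mul, mul_comm]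
  simp_rw [this]
  rw [← map_sum, sum_counit_smul_left']

end Helpers

lemma counit_antipode' (a : B) :
    counit (R := ℂ) (HopfAlgebra.antipode (R := ℂ) a) = counit (R := ℂ) a := by
  set r := ℛ ℂ a
  have h1 : ∑ i ∈ r.index, counit (R := ℂ) (HopfAlgebra.antipode (R := ℂ) (r.left i))
      * counit (R := ℂ) (r.right i) = counit (R := ℂ) a := by
    have := congrArg (counit (R := ℂ)) (HopfAlgebra.sum_antipode_mul_eq_algebraMap_counit r)
    rw [map_sum] at this
    simpa [Bialgebra.counit_mul] using this
  have h2 := sum_counit_apply' r ((counit (R := ℂ)) ∘ₗ HopfAlgebra.antipode (R := ℂ) (A := B))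
  simp only [LinearMap.comp_apply] at h2
  rw [← h2, h1]

section Conv
variable {M : Type} [AddCommGroup M] [Module ℂ M] [Coalgebra ℂ M]

noncomputable def conv (f g : M →ₗ[ℂ] B) : M →ₗ[ℂ] B :=
  LinearMap.mul' ℂ B ∘ₗ TensorProduct.map f g ∘ₗ comul

noncomputable def convUnit : M →ₗ[ℂ] B :=
  Algebra.linearMap ℂ B ∘ₗ counit

lemma conv_repr {ι : Type*} (f g : M →ₗ[ℂ] B) (x : M) (r : Coalgebra.Repr ℂ x ι) :
    conv f g x = ∑ i ∈ r.index, f (r.left i) * g (r.right i) := by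
  simp only [conv, LinearMap.comp_apply, ← r.eq, map_sum, TensorProduct.map_tmul,
    LinearMap.mul'_apply]

lemma conv_unit_right (f : M →ₗ[ℂ] B) : conv f convUnit = f := by
  ext x
  set r := ℛ ℂ x
  rw [conv_repr f convUnit x r]
  have : ∀ i, f (r.left i) * convUnit (r.right i)
      = f (counit (R := ℂ) (r.right i) • r.left i) := by
    intro i
    rw [map_smul]
    simp [convUnit, Algebra.smul_def, Algebra.commutes]
  simp_rw [this]
  rw [← map_sum, sum_counit_smul_left']

lemma conv_unit_left (g : M →ₗ[ℂ] B) : conv convUnit g = g := by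
  ext x
  set r := ℛ ℂ x
  rw [conv_repr convUnit g x r]
  have : ∀ i, convUnit (r.left i) * g (r.right i)
      = g (counit (R := ℂ) (r.left i) • r.right i) := by
    intro i
    rw [map_smul]
    simp [convUnit, Algebra.smul_def]
  simp_rw [this]
  rw [← map_sum, sum_counit_smul_right']

lemma conv_assoc (f g h : M →ₗ[ℂ] B) : conv (conv f g) h = conv f (conv g h) := by
  ext x
  set r := ℛ ℂ x
  have key := Coalgebra.sum_map_tmul_tmul_eq (R := ℂ) f g h x
    (repr := r) (a₁ := fun i => ℛ ℂ (r.left i)) (a₂ := fun i => ℛ ℂ (r.right i))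
  have key2 := congrArg (LinearMap.mul' ℂ B ∘ₗ LinearMap.lTensor B (LinearMap.mul' ℂ B)) key
  simp only [map_sum, LinearMap.comp_apply, LinearMap.lTensor_tmul, LinearMap.mul'_apply] at key2
  rw [conv_repr (conv f g) h x r, conv_repr f (conv g h) x r]
  calc ∑ i ∈ r.index, conv f g (r.left i) * h (r.right i)
      = ∑ i ∈ r.index, ∑ j ∈ (ℛ ℂ (r.left i)).index,
          f ((ℛ ℂ (r.left i)).left j) * (g ((ℛ ℂ (r.left i)).right j) * h (r.right i)) := by
        refine Finset.sum_congr rfl fun i _ => ?_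
        rw [conv_repr f g _ (ℛ ℂ (r.left i)), Finset.sum_mul]
        simp_rw [mul_assoc]
    _ = ∑ i ∈ r.index, ∑ j ∈ (ℛ ℂ (r.right i)).index,
          f (r.left i) * (g ((ℛ ℂ (r.right i)).left j) * h ((ℛ ℂ (r.right i)).right j)) :=
        key2.symm
    _ = ∑ i ∈ r.index, f (r.left i) * conv g h (r.right i) := by
        refine Finset.sum_congr rfl fun i _ => ?_
        rw [conv_repr g h _ (ℛ ℂ (r.right i)), Finset.mul_sum]

lemma conv_inv_unique {f g m : M →ₗ[ℂ] B}
    (hf : conv f m = convUnit) (hg : conv m g = convUnit) : f = g := by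
  have : conv f (conv m g) = conv (conv f m) g := (conv_assoc f m g).symm
  rw [hf, hg, conv_unit_right, conv_unit_left] at this
  exact this

end Conv

/-- Repr of a product from Reprs of the factors. -/
noncomputable def mulRepr {ι κ : Type*} {a b : B} (ra : Coalgebra.Repr ℂ a ι) (rb : Coalgebra.Repr ℂ b κ) :
    Coalgebra.Repr ℂ (a * b) (ι × κ) where
  index := ra.index ×ˢ rb.index
  left := fun p => ra.left p.1 * rb.left p.2
  right := fun p => ra.right p.1 * rb.right p.2
  eq := by
    rw [Finset.sum_product]
    rw [show CoalgebraStruct.comul (R := ℂ) (a * b) = comul (R := ℂ) a * comul (R := ℂ) b from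
      Bialgebra.comul_mul a b, ← ra.eq, ← rb.eq, Finset.sum_mul_sum]
    simp [Algebra.TensorProduct.tmul_mul_tmul]

/-- Repr of a pure tensor in `B ⊗ B` from Reprs of the factors. -/
noncomputable def tmulRepr {ι κ : Type*} {a b : B} (ra : Coalgebra.Repr ℂ a ι) (rb : Coalgebra.Repr ℂ b κ) :
    Coalgebra.Repr ℂ (a ⊗ₜ[ℂ] b : B ⊗[ℂ] B) (ι × κ) where
  index := ra.index ×ˢ rb.index
  left := fun p => ra.left p.1 ⊗ₜ[ℂ] rb.left p.2
  right := fun p => ra.right p.1 ⊗ₜ[ℂ] rb.right p.2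
  eq := by
    rw [Finset.sum_product]
    have h : CoalgebraStruct.comul (R := ℂ) (a ⊗ₜ[ℂ] b)
        = TensorProduct.tensorTensorTensorComm ℂ B B B B
          ((∑ i ∈ ra.index, ra.left i ⊗ₜ[ℂ] ra.right i) ⊗ₜ[ℂ]
            (∑ j ∈ rb.index, rb.left j ⊗ₜ[ℂ] rb.right j)) := by
      rw [ra.eq, rb.eq]; rfl
    rw [h, TensorProduct.sum_tmul, map_sum]
    refine Finset.sum_congr rfl fun i _ => ?_
    rw [TensorProduct.tmul_sum, map_sum]
    refine Finset.sum_congr rfl fun j _ => ?_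
    simp [TensorProduct.tensorTensorTensorComm_tmul]

lemma antipode_mul' (a b : B) :
    HopfAlgebra.antipode (R := ℂ) (a * b)
      = HopfAlgebra.antipode (R := ℂ) b * HopfAlgebra.antipode (R := ℂ) a := by
  set S := HopfAlgebra.antipode (R := ℂ) (A := B) with hS
  set m := LinearMap.mul' ℂ B with hm
  set g : B ⊗[ℂ] B →ₗ[ℂ] B :=
    m ∘ₗ TensorProduct.map S S ∘ₗ (TensorProduct.comm ℂ B B).toLinearMap with hg0
  have hf : conv (S ∘ₗ m) m = convUnit := by
    apply TensorProduct.ext'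
    intro x y
    rw [conv_repr _ _ _ (tmulRepr (ℛ ℂ x) (ℛ ℂ y))]
    have : ∑ p ∈ (tmulRepr (ℛ ℂ x) (ℛ ℂ y)).index,
        (S ∘ₗ m) ((tmulRepr (ℛ ℂ x) (ℛ ℂ y)).left p) * m ((tmulRepr (ℛ ℂ x) (ℛ ℂ y)).right p)
        = ∑ p ∈ (mulRepr (ℛ ℂ x) (ℛ ℂ y)).index,
          S ((mulRepr (ℛ ℂ x) (ℛ ℂ y)).left p) * (mulRepr (ℛ ℂ x) (ℛ ℂ y)).right p := by
      refine Finset.sum_congr rfl fun p _ => ?_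
      simp [tmulRepr, mulRepr, hm]
    rw [this, HopfAlgebra.sum_antipode_mul_eq_algebraMap_counit]
    simp [convUnit, Bialgebra.counit_mul, ← map_mul, mul_comm]
  have hg : conv m g = convUnit := by
    apply TensorProduct.ext'
    intro x y
    set rx := ℛ ℂ x
    set ry := ℛ ℂ y
    rw [conv_repr _ _ _ (tmulRepr rx ry)]
    have step1 : ∑ p ∈ (tmulRepr rx ry).index,
        m ((tmulRepr rx ry).left p) * g ((tmulRepr rx ry).right p)
        = ∑ i ∈ rx.index, ∑ j ∈ ry.index,
          rx.left i * ((ry.left j * S (ry.right j)) * S (rx.right i)) := by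
      show (∑ p ∈ rx.index ×ˢ ry.index,
        m (rx.left p.1 ⊗ₜ[ℂ] ry.left p.2) * g (rx.right p.1 ⊗ₜ[ℂ] ry.right p.2)) = _
      rw [Finset.sum_product]
      refine Finset.sum_congr rfl fun i _ => Finset.sum_congr rfl fun j _ => ?_
      show m (rx.left i ⊗ₜ[ℂ] ry.left j) * g (rx.right i ⊗ₜ[ℂ] ry.right j) = _
      simp only [hg0, hm, LinearMap.comp_apply, LinearEquiv.coe_coe, TensorProduct.comm_tmul,
        TensorProduct.map_tmul, LinearMap.mul'_apply]
      noncomm_ring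
    rw [step1]
    have step2 : ∀ i ∈ rx.index, ∑ j ∈ ry.index,
        rx.left i * ((ry.left j * S (ry.right j)) * S (rx.right i))
        = counit (R := ℂ) y • (rx.left i * S (rx.right i)) := by
      intro i _
      rw [← Finset.mul_sum, ← Finset.sum_mul, HopfAlgebra.sum_mul_antipode_eq_smul]
      rw [smul_mul_assoc, one_mul, mul_smul_comm]
    rw [Finset.sum_congr rfl step2, ← Finset.smul_sum, HopfAlgebra.sum_mul_antipode_eq_smul]
    simp only [smul_smul]
    show (counit (R := ℂ) y * counit (R := ℂ) x) • (1 : B) = convUnit (x ⊗ₜ[ℂ] y)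
    rw [mul_comm]
    simp [convUnit, Algebra.algebraMap_eq_smul_one, mul_comm]
  have huniq : S ∘ₗ m = g := conv_inv_unique hf hg
  have := LinearMap.congr_fun huniq (a ⊗ₜ[ℂ] b)
  simpa [hg0, hm] using this

lemma sigma_repr {ι : Type*} (L : B ⊗[ℂ] B →ₗ[ℂ] ℂ) {x : B} (r : Coalgebra.Repr ℂ x ι) :
    sigma L x = ∑ i ∈ r.index, L (r.left i ⊗ₜ[ℂ] HopfAlgebra.antipode (R := ℂ) (r.right i)) := by
  simp only [sigma, LinearMap.comp_apply, ← r.eq, map_sum, TensorProduct.map_tmul,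
    LinearMap.id_coe, id_eq]

/-- Let `B` be a Hopf algebra, `L` a normalized commuting 2-cocycle and
`σ = L ∘ (id ⊗ S) ∘ Δ`.  Then `∂σ = L + L ∘ (S ⊗ S) ∘ τ`, where
`∂σ(a ⊗ b) = δ(a)σ(b) − σ(ab) + σ(a)δ(b)`. -/
theorem stmt17 (L : B ⊗[ℂ] B →ₗ[ℂ] ℂ)
    (hnorm : L (1 ⊗ₜ[ℂ] 1) = 0)
    (hcomm : LconvMu L = MuConvL L)
    (hcocycle : ∀ a b c : B,
      counit (R := ℂ) a * L (b ⊗ₜ[ℂ] c) - L ((a * b) ⊗ₜ[ℂ] c)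
        + L (a ⊗ₜ[ℂ] (b * c)) - L (a ⊗ₜ[ℂ] b) * counit (R := ℂ) c = 0) :
    ∀ a b : B,
      counit (R := ℂ) a * sigma L b - sigma L (a * b) + sigma L a * counit (R := ℂ) b
        = L (a ⊗ₜ[ℂ] b)
          + L ((HopfAlgebra.antipode (R := ℂ) b) ⊗ₜ[ℂ] (HopfAlgebra.antipode (R := ℂ) a)) := by
  intro a b
  set S := HopfAlgebra.antipode (R := ℂ) (A := B) with hS
  have L1 : ∀ c : B, L ((1 : B) ⊗ₜ[ℂ] c) = 0 := by
    intro c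
    have h := hcocycle 1 1 c
    simp only [Bialgebra.counit_one, one_mul, mul_one] at h
    linear_combination h + counit (R := ℂ) c * hnorm
  set ra := ℛ ℂ a with hra
  set rb := ℛ ℂ b with hrb
  have hσa : sigma L a = ∑ i ∈ ra.index, L (ra.left i ⊗ₜ[ℂ] S (ra.right i)) := sigma_repr L ra
  have hσb : sigma L b = ∑ j ∈ rb.index, L (rb.left j ⊗ₜ[ℂ] S (rb.right j)) := sigma_repr L rb
  -- Step B :
  have hB : ∑ j ∈ rb.index, L (rb.left j ⊗ₜ[ℂ] (S (rb.right j) * S a))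
      = sigma L b * counit (R := ℂ) a - L (S b ⊗ₜ[ℂ] S a) := by
    have hterm : ∀ j ∈ rb.index, L (rb.left j ⊗ₜ[ℂ] (S (rb.right j) * S a))
        = L ((rb.left j * S (rb.right j)) ⊗ₜ[ℂ] S a)
          - counit (R := ℂ) (rb.left j) * L (S (rb.right j) ⊗ₜ[ℂ] S a)
          + L (rb.left j ⊗ₜ[ℂ] S (rb.right j)) * counit (R := ℂ) (S a) := by
      intro j _
      linear_combination hcocycle (rb.left j) (S (rb.right j)) (S a)
    rw [Finset.sum_congr rfl hterm, Finset.sum_add_distrib, Finset.sum_sub_distrib]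
    have hP1 : ∑ j ∈ rb.index, L ((rb.left j * S (rb.right j)) ⊗ₜ[ℂ] S a) = 0 := by
      have h1 : ∑ j ∈ rb.index, L ((rb.left j * S (rb.right j)) ⊗ₜ[ℂ] S a)
          = L ((∑ j ∈ rb.index, rb.left j * S (rb.right j)) ⊗ₜ[ℂ] S a) := by
        rw [TensorProduct.sum_tmul, map_sum]
      rw [h1, HopfAlgebra.sum_mul_antipode_eq_smul, ← TensorProduct.smul_tmul', map_smul,
        L1, smul_zero]
    have hP2 : ∑ j ∈ rb.index, counit (R := ℂ) (rb.left j) * L (S (rb.right j) ⊗ₜ[ℂ] S a)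
        = L (S b ⊗ₜ[ℂ] S a) := by
      have := counit_sum_apply' rb (L ∘ₗ ((TensorProduct.mk ℂ B B).flip (S a)) ∘ₗ S)
      simpa using this
    have hP3 : ∑ j ∈ rb.index, L (rb.left j ⊗ₜ[ℂ] S (rb.right j)) * counit (R := ℂ) (S a)
        = sigma L b * counit (R := ℂ) a := by
      rw [← Finset.sum_mul, ← hσb, counit_antipode']
    rw [hP1, hP2, hP3]; ring
  -- Step A : expansion of `σ (a * b)`
  have hmul : sigma L (a * b) = ∑ i ∈ ra.index, ∑ j ∈ rb.index,
      L ((ra.left i * rb.left j) ⊗ₜ[ℂ] (S (rb.right j) * S (ra.right i))) := by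
    rw [sigma_repr L (mulRepr ra rb)]
    show (∑ p ∈ ra.index ×ˢ rb.index,
      L ((ra.left p.1 * rb.left p.2) ⊗ₜ[ℂ] S (ra.right p.1 * rb.right p.2))) = _
    rw [Finset.sum_product]
    exact Finset.sum_congr rfl fun i _ => Finset.sum_congr rfl fun j _ => by rw [antipode_mul']
  have hT1 : ∑ i ∈ ra.index, ∑ j ∈ rb.index,
      counit (R := ℂ) (ra.left i) * L (rb.left j ⊗ₜ[ℂ] (S (rb.right j) * S (ra.right i)))
      = ∑ j ∈ rb.index, L (rb.left j ⊗ₜ[ℂ] (S (rb.right j) * S a)) := by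
    rw [Finset.sum_comm]
    refine Finset.sum_congr rfl fun j _ => ?_
    have := counit_sum_apply' ra (L ∘ₗ (TensorProduct.mk ℂ B B (rb.left j))
      ∘ₗ (LinearMap.mulLeft ℂ (S (rb.right j))) ∘ₗ S)
    simpa using this
  have hT2 : ∑ i ∈ ra.index, ∑ j ∈ rb.index,
      L (ra.left i ⊗ₜ[ℂ] (rb.left j * (S (rb.right j) * S (ra.right i))))
      = counit (R := ℂ) b * sigma L a := by
    have hinner : ∀ i ∈ ra.index, ∑ j ∈ rb.index,
        L (ra.left i ⊗ₜ[ℂ] (rb.left j * (S (rb.right j) * S (ra.right i))))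
        = counit (R := ℂ) b * L (ra.left i ⊗ₜ[ℂ] S (ra.right i)) := by
      intro i _
      set φ : B →ₗ[ℂ] ℂ :=
        L ∘ₗ (TensorProduct.mk ℂ B B (ra.left i)) ∘ₗ (LinearMap.mulRight ℂ (S (ra.right i)))
      have h1 : ∀ j, L (ra.left i ⊗ₜ[ℂ] (rb.left j * (S (rb.right j) * S (ra.right i))))
          = φ (rb.left j * S (rb.right j)) := by
        intro j; simp [φ, mul_assoc]
      simp_rw [h1]
      rw [← map_sum, HopfAlgebra.sum_mul_antipode_eq_smul, map_smul]
      simp [φ, smul_eq_mul]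
    rw [Finset.sum_congr rfl hinner, ← Finset.mul_sum, ← hσa]
  have hT3 : ∑ i ∈ ra.index, ∑ j ∈ rb.index,
      L (ra.left i ⊗ₜ[ℂ] rb.left j) * counit (R := ℂ) (S (rb.right j) * S (ra.right i))
      = L (a ⊗ₜ[ℂ] b) := by
    have hinner : ∀ i ∈ ra.index, ∑ j ∈ rb.index,
        L (ra.left i ⊗ₜ[ℂ] rb.left j) * counit (R := ℂ) (S (rb.right j) * S (ra.right i))
        = L (ra.left i ⊗ₜ[ℂ] b) * counit (R := ℂ) (ra.right i) := by
      intro i _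
      have h1 : ∀ j, L (ra.left i ⊗ₜ[ℂ] rb.left j)
            * counit (R := ℂ) (S (rb.right j) * S (ra.right i))
          = (L (ra.left i ⊗ₜ[ℂ] rb.left j) * counit (R := ℂ) (rb.right j))
            * counit (R := ℂ) (ra.right i) := by
        intro j
        rw [Bialgebra.counit_mul, counit_antipode', counit_antipode']
        ring
      simp_rw [h1]
      rw [← Finset.sum_mul]
      congr 1
      have := sum_counit_apply' rb (L ∘ₗ (TensorProduct.mk ℂ B B (ra.left i)))
      simpa using this
    rw [Finset.sum_congr rfl hinner]
    have := sum_counit_apply' ra (L ∘ₗ ((TensorProduct.mk ℂ B B).flip b))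
    simpa using this
  have hsplit : sigma L (a * b)
      = (∑ j ∈ rb.index, L (rb.left j ⊗ₜ[ℂ] (S (rb.right j) * S a)))
        + counit (R := ℂ) b * sigma L a - L (a ⊗ₜ[ℂ] b) := by
    rw [hmul]
    have hterm : ∀ i ∈ ra.index, ∀ j ∈ rb.index,
        L ((ra.left i * rb.left j) ⊗ₜ[ℂ] (S (rb.right j) * S (ra.right i)))
        = counit (R := ℂ) (ra.left i) * L (rb.left j ⊗ₜ[ℂ] (S (rb.right j) * S (ra.right i)))
          + L (ra.left i ⊗ₜ[ℂ] (rb.left j * (S (rb.right j) * S (ra.right i))))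
          - L (ra.left i ⊗ₜ[ℂ] rb.left j) * counit (R := ℂ) (S (rb.right j) * S (ra.right i)) := by
      intro i _ j _
      linear_combination (-1 : ℂ) * hcocycle (ra.left i) (rb.left j) (S (rb.right j) * S (ra.right i))
    calc ∑ i ∈ ra.index, ∑ j ∈ rb.index,
        L ((ra.left i * rb.left j) ⊗ₜ[ℂ] (S (rb.right j) * S (ra.right i)))
        = ∑ i ∈ ra.index, ∑ j ∈ rb.index,
          (counit (R := ℂ) (ra.left i) * L (rb.left j ⊗ₜ[ℂ] (S (rb.right j) * S (ra.right i)))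
          + L (ra.left i ⊗ₜ[ℂ] (rb.left j * (S (rb.right j) * S (ra.right i))))
          - L (ra.left i ⊗ₜ[ℂ] rb.left j) * counit (R := ℂ) (S (rb.right j) * S (ra.right i))) :=
          Finset.sum_congr rfl fun i hi => Finset.sum_congr rfl fun j hj => hterm i hi j hj
      _ = (∑ i ∈ ra.index, ∑ j ∈ rb.index,
            counit (R := ℂ) (ra.left i) * L (rb.left j ⊗ₜ[ℂ] (S (rb.right j) * S (ra.right i))))
          + (∑ i ∈ ra.index, ∑ j ∈ rb.index,
            L (ra.left i ⊗ₜ[ℂ] (rb.left j * (S (rb.right j) * S (ra.right i)))))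
          - ∑ i ∈ ra.index, ∑ j ∈ rb.index,
            L (ra.left i ⊗ₜ[ℂ] rb.left j) * counit (R := ℂ) (S (rb.right j) * S (ra.right i)) := by
          simp [Finset.sum_add_distrib, Finset.sum_sub_distrib]
      _ = _ := by rw [hT1, hT2, hT3]
  rw [hsplit, hB]
  ring
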